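/- Let R be a reflexive transitive relation on a set S admitting a coherent ℕ-valued cocycle δ (additive over composition, δ⁻¹(0) = diagonal, every pair of value k ≥ 2 factors into k pairs of value 1). If δ' is another coherent ℕ-valued cocycle on R, then δ'(x,y) ≤ δ(x,y) for all (x,y) ∈ R. -/

import Mathlib

/-- A cocycle on a reflexive transitive relation `R`: additive over composition and
vanishing exactly on the diagonal. -/
def IsCocycle {S : Type*} (R : S → S → Prop) (δ : S → S → ℕ) : Prop :=
  (∀ x y z, R x y → R y z → δ x z = δ x y + δ y z) ∧
    (∀ x y, R x y → (δ x y = 0 ↔ x = y))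

/-- Coherence: every pair of `δ`-value `k ≥ 2` factors as a composition of `k` pairs of
`δ`-value `1`. -/
def IsCoherent {S : Type*} (R : S → S → Prop) (δ : S → S → ℕ) : Prop :=
  ∀ x y (k : ℕ), R x y → δ x y = k → 2 ≤ k →
    ∃ c : Fin (k + 1) → S, c 0 = x ∧ c (Fin.last k) = y ∧
      ∀ i : Fin k, R (c i.castSucc) (c i.succ) ∧ δ (c i.castSucc) (c i.succ) = 1

/-- Telescoping a cocycle along a chain. -/
lemma chain_sum {S : Type*} (R : S → S → Prop)
    (hrefl : ∀ x, R x x) (htrans : ∀ x y z, R x y → R y z → R x z)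
    (δ : S → S → ℕ) (hδ : IsCocycle R δ) :
    ∀ (k : ℕ) (c : Fin (k + 1) → S), (∀ i : Fin k, R (c i.castSucc) (c i.succ)) →
      R (c 0) (c (Fin.last k)) ∧
        δ (c 0) (c (Fin.last k)) = ∑ i : Fin k, δ (c i.castSucc) (c i.succ) := by
  intro k
  induction k with
  | zero =>
    intro c _
    refine ⟨hrefl _, ?_⟩
    simp [(hδ.2 _ _ (hrefl _)).2 rfl]
  | succ k ih =>
    intro c hc
    have ih' := ih (fun i => c i.castSucc) (fun i => by
      exact hc i.castSucc)
    have hlast : R (c (Fin.last k).castSucc) (c (Fin.last (k+1))) := by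
      simpa using hc (Fin.last k)
    have h0 : ((0 : Fin (k+1)).castSucc : Fin (k+2)) = 0 := rfl
    refine ⟨htrans _ _ _ (h0 ▸ ih'.1) hlast, ?_⟩
    rw [hδ.1 _ _ _ (h0 ▸ ih'.1) hlast, Fin.sum_univ_castSucc]
    congr 1
    · have h := ih'.2
      simp only [Fin.succ_castSucc] at h ⊢
      exact h

/-- If `δ` and `δ'` are coherent ℕ-valued cocycles on `R`, then `δ' ≤ δ` pointwise on `R`. -/
theorem coherent_cocycle_le {S : Type*} (R : S → S → Prop)
    (hrefl : ∀ x, R x x) (htrans : ∀ x y z, R x y → R y z → R x z)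
    (δ δ' : S → S → ℕ)
    (hδ : IsCocycle R δ) (hδc : IsCoherent R δ)
    (hδ' : IsCocycle R δ') (hδ'c : IsCoherent R δ') :
    ∀ x y, R x y → δ' x y ≤ δ x y := by
  intro x y hxy
  set n := δ' x y with hn
  rcases Nat.lt_or_ge n 2 with h2 | h2
  · -- n = 0 or 1
    interval_cases n
    · exact Nat.zero_le _
    · -- δ' x y = 1 means x ≠ y, so δ x y ≥ 1
      have hne : x ≠ y := fun h => by
        have := (hδ'.2 x y hxy).2 h
        omega
      have : δ x y ≠ 0 := fun h => hne ((hδ.2 x y hxy).1 h)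
      omega
  · obtain ⟨c, hc0, hcl, hstep⟩ := hδ'c x y n hxy hn.symm h2
    have hchain := chain_sum R hrefl htrans δ hδ n c (fun i => (hstep i).1)
    have hsum : δ x y = ∑ i : Fin n, δ (c i.castSucc) (c i.succ) := by
      rw [← hc0, ← hcl]; exact hchain.2
    have hpos : ∀ i : Fin n, 1 ≤ δ (c i.castSucc) (c i.succ) := by
      intro i
      have hne : c i.castSucc ≠ c i.succ := fun h => by
        have := (hδ'.2 _ _ (hstep i).1).2 h
        have := (hstep i).2
        omega
      have : δ (c i.castSucc) (c i.succ) ≠ 0 :=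
        fun h => hne ((hδ.2 _ _ (hstep i).1).1 h)
      omega
    calc δ' x y = n := rfl
      _ = ∑ _i : Fin n, 1 := by simp
      _ ≤ ∑ i : Fin n, δ (c i.castSucc) (c i.succ) := Finset.sum_le_sum fun i _ => hpos i
      _ = δ x y := hsum.symm
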